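/- Let G be a looped simple graph, S a subtransversal of W(G), and v a vertex with (v,φ),(v,χ),(v,ψ) ∉ S. Then the closure of S in M(IAS(G)) contains at most one of (v,φ), (v,χ), (v,ψ). -/

import Mathlib

/-- The three column types of the matrix `IAS(G) = (I | A | I+A)`. -/
inductive GType : Type
  | phi | chi | psi
  deriving DecidableEq

instance : Fintype GType :=
  ⟨{GType.phi, GType.chi, GType.psi}, fun x => by cases x <;> simp⟩

/-- The column of `IAS(G) = (I | A(G) | I+A(G))` indexed by a ground set element of
`W(G) = V × {φ, χ, ψ}`. -/
def iasCol {V : Type} [DecidableEq V] (A : Matrix V V (ZMod 2)) : V × GType → V → ZMod 2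
  | (v, GType.phi) => fun w => if w = v then 1 else 0
  | (v, GType.chi) => fun w => A w v
  | (v, GType.psi) => fun w => (if w = v then 1 else 0) + A w v

/-- Independence in the binary matroid `M(IAS(G))`: a set of ground elements is independent
iff the corresponding columns of `IAS(G)` are linearly independent over `GF(2)`. -/
def IasIndep {V : Type} [DecidableEq V] (A : Matrix V V (ZMod 2))
    (S : Set (V × GType)) : Prop :=
  LinearIndependent (ZMod 2) (fun p : S => iasCol A p.1)

/-- A circuit of `M(IAS(G))`: a minimal dependent set. -/
def IasCircuit {V : Type} [DecidableEq V] (A : Matrix V V (ZMod 2))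
    (C : Set (V × GType)) : Prop :=
  ¬ IasIndep A C ∧ ∀ D : Set (V × GType), D ⊂ C → IasIndep A D

/-- The rank of a subset of the ground set of `M(IAS(G))`: the `GF(2)`-rank of the
corresponding set of columns of `IAS(G)`. -/
noncomputable def iasRk {V : Type} [Fintype V] [DecidableEq V] (A : Matrix V V (ZMod 2))
    (S : Set (V × GType)) : ℕ :=
  Module.finrank (ZMod 2) (Submodule.span (ZMod 2) (iasCol A '' S))

/-- the closure of a subtransversal `S` contains at most one of the three
elements `(v,φ), (v,χ), (v,ψ)` of a canonical cell disjoint from `S`.  (Here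
`x ∈ cl(S)` iff `r(S ∪ {x}) = r(S)`.) -/
lemma gtype_sum {M : Type*} [AddCommMonoid M] (f : GType → M) :
    ∑ τ : GType, f τ = f .phi + f .chi + f .psi := by
  have h : (Finset.univ : Finset GType) = {GType.phi, GType.chi, GType.psi} := by decide
  rw [h]; simp [Finset.sum_insert, add_assoc]

lemma rep {V : Type} [Fintype V] [DecidableEq V] (A : Matrix V V (ZMod 2))
    (S : Set (V × GType)) (t : V → ZMod 2)
    (ht : t ∈ Submodule.span (ZMod 2) (iasCol A '' S)) :
    ∃ l : (V × GType) →₀ ZMod 2, (∀ p, p ∉ S → l p = 0) ∧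
      ∀ u, t u = (l (u, .phi) + l (u, .psi)) +
        ∑ w, A u w * (l (w, .chi) + l (w, .psi)) := by
  rw [Finsupp.mem_span_image_iff_linearCombination] at ht
  obtain ⟨l, hl, hlt⟩ := ht
  rw [Finsupp.mem_supported] at hl
  refine ⟨l, ?_, ?_⟩
  · intro p hp
    by_contra h
    exact hp (hl (Finsupp.mem_support_iff.mpr h))
  · intro u
    rw [← hlt, Finsupp.linearCombination_apply,
      Finsupp.sum_fintype _ _ (by intro i; simp)]
    have : (∑ p : V × GType, l p • iasCol A p) u
        = ∑ p : V × GType, l p * iasCol A p u := by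
      rw [Finset.sum_apply]; rfl
    rw [this, Fintype.sum_prod_type]
    have : ∀ w : V, ∑ τ : GType, l (w, τ) * iasCol A (w, τ) u
        = (if u = w then (1:ZMod 2) else 0) * (l (w, .phi) + l (w, .psi))
          + A u w * (l (w, .chi) + l (w, .psi)) := by
      intro w
      rw [gtype_sum]
      simp only [iasCol]
      ring
    simp only [this]
    rw [Finset.sum_add_distrib]
    congr 1
    simp [Finset.sum_ite_eq]

lemma main_calc {V : Type} [Fintype V] [DecidableEq V] (A : Matrix V V (ZMod 2))
    (hA : A.IsSymm) (v : V) (x₁ y₁ x₂ y₂ : V → ZMod 2)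
    (h₁ : ∀ u, (if u = v then (1:ZMod 2) else 0) = x₁ u + ∑ w, A u w * y₁ w)
    (h₂ : ∀ u, A u v = x₂ u + ∑ w, A u w * y₂ w)
    (hx₁ : x₁ v = 0) (hy₂ : y₂ v = 0)
    (hcross : ∀ u, y₁ u * x₂ u = x₁ u * y₂ u) : False := by
  have e1 : ∑ u, y₂ u * x₁ u + ∑ u, y₂ u * ∑ w, A u w * y₁ w = 0 := by
    have hz : ∑ u, y₂ u * (if u = v then (1:ZMod 2) else 0) = 0 := by
      rw [Finset.sum_eq_single v]
      · simp [hy₂]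
      · intro b _ hb; simp [hb]
      · simp
    rw [← Finset.sum_add_distrib, ← hz]
    apply Finset.sum_congr rfl
    intro u _
    rw [← mul_add, ← h₁ u]
  have e2 : ∑ u, y₁ u * x₂ u + ∑ u, y₁ u * ∑ w, A u w * y₂ w = 1 := by
    have l1 : ∑ u, y₁ u * A u v = 1 := by
      have hc : ∀ u ∈ Finset.univ, y₁ u * A u v = A v u * y₁ u := by
        intro u _; rw [← hA.apply v u]; ring
      rw [Finset.sum_congr rfl hc]
      have hv := h₁ v
      simp only [if_pos rfl, hx₁, zero_add] at hv
      exact hv.symm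
    rw [← l1, ← Finset.sum_add_distrib]
    apply Finset.sum_congr rfl
    intro u _
    rw [← mul_add, ← h₂ u]
  have hB : ∑ u, y₂ u * ∑ w, A u w * y₁ w = ∑ u, y₁ u * ∑ w, A u w * y₂ w := by
    simp_rw [Finset.mul_sum]
    rw [Finset.sum_comm]
    apply Finset.sum_congr rfl; intro a _
    apply Finset.sum_congr rfl; intro b _
    rw [← hA.apply a b]; ring
  have hd : ∑ u, y₂ u * x₁ u = ∑ u, y₁ u * x₂ u := by
    apply Finset.sum_congr rfl; intro u _
    rw [hcross u]; ring
  rw [hd, hB] at e1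
  exact absurd (e1.symm.trans e2) (by decide)

theorem closure_subtransversal {V : Type} [Fintype V] [DecidableEq V]
    (A : Matrix V V (ZMod 2)) (hA : A.IsSymm) (v : V) (S : Set (V × GType))
    (hsub : ∀ (w : V) (ι κ : GType), (w, ι) ∈ S → (w, κ) ∈ S → ι = κ)
    (hvS : ∀ ι : GType, (v, ι) ∉ S) :
    ∀ ι κ : GType, ι ≠ κ →
      iasRk A (insert (v, ι) S) = iasRk A S →
      iasRk A (insert (v, κ) S) ≠ iasRk A S := by
  intro ι κ hne h1 h2
  have key : ∀ τ : GType, iasRk A (insert (v, τ) S) = iasRk A S →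
      iasCol A (v, τ) ∈ Submodule.span (ZMod 2) (iasCol A '' S) := by
    intro τ h
    have hle : Submodule.span (ZMod 2) (iasCol A '' S) ≤
        Submodule.span (ZMod 2) (iasCol A '' (insert (v, τ) S)) :=
      Submodule.span_mono (Set.image_mono (Set.subset_insert _ _))
    have heq := Submodule.eq_of_le_of_finrank_eq hle h.symm
    rw [heq]
    exact Submodule.subset_span ⟨(v, τ), Set.mem_insert _ _, rfl⟩
  have hι := key ι h1
  have hκ := key κ h2
  set Msp := Submodule.span (ZMod 2) (iasCol A '' S) with hMsp
  have hpsi_eq : iasCol A (v, GType.psi) = iasCol A (v, GType.phi) + iasCol A (v, GType.chi) := by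
    funext w; simp [iasCol]
  have hsub_phi : iasCol A (v, GType.phi) = iasCol A (v, GType.psi) - iasCol A (v, GType.chi) := by
    rw [hpsi_eq]; abel
  have hsub_chi : iasCol A (v, GType.chi) = iasCol A (v, GType.psi) - iasCol A (v, GType.phi) := by
    rw [hpsi_eq]; abel
  have hmem : iasCol A (v, GType.phi) ∈ Msp ∧ iasCol A (v, GType.chi) ∈ Msp := by
    cases ι <;> cases κ
    · exact absurd rfl hne
    · exact ⟨hι, hκ⟩
    · exact ⟨hι, by rw [hsub_chi]; exact Submodule.sub_mem _ hκ hι⟩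
    · exact ⟨hκ, hι⟩
    · exact absurd rfl hne
    · exact ⟨by rw [hsub_phi]; exact Submodule.sub_mem _ hκ hι, hι⟩
    · exact ⟨hκ, by rw [hsub_chi]; exact Submodule.sub_mem _ hι hκ⟩
    · exact ⟨by rw [hsub_phi]; exact Submodule.sub_mem _ hι hκ, hκ⟩
    · exact absurd rfl hne
  obtain ⟨l₁, hl₁, h₁⟩ := rep A S _ hmem.1
  obtain ⟨l₂, hl₂, h₂⟩ := rep A S _ hmem.2
  simp only [iasCol] at h₁ h₂
  have hcross : ∀ u, (l₁ (u, GType.chi) + l₁ (u, GType.psi)) * (l₂ (u, GType.phi) + l₂ (u, GType.psi))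
      = (l₁ (u, GType.phi) + l₁ (u, GType.psi)) * (l₂ (u, GType.chi) + l₂ (u, GType.psi)) := by
    intro u
    have hc : ∀ τ τ' : GType, τ ≠ τ' → l₁ (u, τ) * l₂ (u, τ') = 0 := by
      intro τ τ' hττ'
      by_contra h
      have m1 : (u, τ) ∈ S := by
        by_contra hm; exact left_ne_zero_of_mul h (hl₁ _ hm)
      have m2 : (u, τ') ∈ S := by
        by_contra hm; exact right_ne_zero_of_mul h (hl₂ _ hm)
      exact hττ' (hsub u τ τ' m1 m2)
    linear_combination hc .chi .phi (by decide) + hc .chi .psi (by decide)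
      + hc .psi .phi (by decide) - hc .phi .chi (by decide)
      - hc .phi .psi (by decide) - hc .psi .chi (by decide)
  exact main_calc A hA v
    (fun u => l₁ (u, .phi) + l₁ (u, .psi)) (fun u => l₁ (u, .chi) + l₁ (u, .psi))
    (fun u => l₂ (u, .phi) + l₂ (u, .psi)) (fun u => l₂ (u, .chi) + l₂ (u, .psi))
    h₁ h₂
    (by simp [hl₁ _ (hvS GType.phi), hl₁ _ (hvS GType.psi)])
    (by simp [hl₂ _ (hvS GType.chi), hl₂ _ (hvS GType.psi)])
    hcross
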